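/- Suppose the group Γ has the factorization property. Let G be a finitely generated group and let R_1 < R_2 < R_3 < ⋯ be a strictly increasing sequence of Γ-limit quotients of G (that is, R_{m+1} > R_m for every m). Then there exists a Γ-limit quotient R of G such that R > R_m for every m. -/

import Mathlib

open Filter

universe uG

/-- A sequence of homomorphisms `h : ℕ → G →* Γ` is *stable* if for every `g ∈ G`,
either `h n g = 1` for all but finitely many `n`, or `h n g ≠ 1` for all but
finitely many `n`. -/
def StableSeq {G Γ : Type*} [Group G] [Group Γ] (h : ℕ → G →* Γ) : Prop :=
  ∀ g : G, (∀ᶠ n in atTop, h n g = 1) ∨ (∀ᶠ n in atTop, h n g ≠ 1)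

/-- The *stable kernel* of a sequence of homomorphisms: the set of `g ∈ G` such that
`h n g = 1` for all but finitely many `n`.  It is always a subgroup. -/
def stableKer {G Γ : Type*} [Group G] [Group Γ] (h : ℕ → G →* Γ) : Subgroup G where
  carrier := { g | ∀ᶠ n in atTop, h n g = 1 }
  one_mem' := Eventually.of_forall fun n => map_one (h n)
  mul_mem' := fun ha hb => (ha.and hb).mono fun n hn => by
    simp only [map_mul, hn.1, hn.2, one_mul]
  inv_mem' := fun ha => ha.mono fun n hn => by
    simp only [map_inv, hn, inv_one]

instance stableKer_normal {G Γ : Type*} [Group G] [Group Γ] (h : ℕ → G →* Γ) :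
    (stableKer h).Normal where
  conj_mem := fun x hx g => hx.mono fun n hn => by
    simp only [map_mul, map_inv, hn, mul_one, mul_inv_cancel]

/-- `q : G →* L` is a `Γ`-limit quotient of `G` if it is surjective and its kernel
is the stable kernel of some stable sequence of homomorphisms `G →* Γ`. -/
def IsLimitQuotient (Γ : Type*) [Group Γ] {G L : Type*} [Group G] [Group L]
    (q : G →* L) : Prop :=
  Function.Surjective q ∧ ∃ h : ℕ → G →* Γ, StableSeq h ∧ q.ker = stableKer h

/-- `L` is a `Γ`-limit group if it is (isomorphic to) a `Γ`-limit quotient of some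
finitely generated group. -/
def IsLimitGroup (Γ : Type*) [Group Γ] (L : Type*) [Group L] : Prop :=
  ∃ (G : GrpCat.{uG}) (q : G →* L), Group.FG G ∧ IsLimitQuotient Γ q

/-- The strict order on limit quotients of a fixed group `G`: `R₁ > R₂` iff there is an
epimorphism `τ : R₁ → R₂` with nontrivial kernel such that `q₂ = τ ∘ q₁`. -/
def QuotGT {G R₁ R₂ : Type*} [Group G] [Group R₁] [Group R₂]
    (q₁ : G →* R₁) (q₂ : G →* R₂) : Prop :=
  ∃ τ : R₁ →* R₂, Function.Surjective τ ∧ τ.ker ≠ ⊥ ∧ q₂ = τ.comp q₁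

/-- Two quotients of `G` are equivalent if they differ by an isomorphism commuting with the
quotient maps. -/
def QuotEquiv {G R₁ R₂ : Type*} [Group G] [Group R₁] [Group R₂]
    (q₁ : G →* R₁) (q₂ : G →* R₂) : Prop :=
  ∃ τ : R₁ ≃* R₂, ∀ g : G, τ (q₁ g) = q₂ g

/-- `G` is fully residually `Γ` if every finite subset of `G` is mapped injectively by
some homomorphism `G →* Γ`. -/
def FullyResidually (Γ : Type*) [Group Γ] (G : Type*) [Group G] : Prop :=
  ∀ F : Finset G, ∃ h : G →* Γ, Set.InjOn h ↑F

/-- `Γ` has the *factorization property* if for every finitely generated group `H` and every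
stable sequence `h : ℕ → H →* Γ` with stable kernel `K`, some subsequence of `h` consists of
homomorphisms factoring through `H ⧸ K`. -/
def FactorizationProperty (Γ : Type*) [Group Γ] : Prop :=
  ∀ (H : GrpCat.{uG}), Group.FG H → ∀ h : ℕ → H →* Γ, StableSeq h →
    ∃ φ : ℕ → ℕ, StrictMono φ ∧ ∀ t : ℕ,
      ∃ π : (H ⧸ stableKer h) →* Γ, h (φ t) = π.comp (QuotientGroup.mk' (stableKer h))

lemma countable_of_fg' (G : Type*) [Group G] [Group.FG G] : Countable G := by
  obtain ⟨S, hS⟩ := Group.FG.out (G := G)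
  have hfin : (↑S ∪ (↑S)⁻¹ : Set G).Finite := S.finite_toSet.union S.finite_toSet.inv
  have : Countable (↑S ∪ (↑S)⁻¹ : Set G) := hfin.countable.to_subtype
  have hsurj : Function.Surjective
      (fun l : List (↑S ∪ (↑S)⁻¹ : Set G) => (l.map Subtype.val).prod) := by
    intro g
    have hg : g ∈ Submonoid.closure (↑S ∪ (↑S)⁻¹ : Set G) := by
      rw [← Subgroup.closure_toSubmonoid, hS]; trivial
    obtain ⟨l, hl, hprod⟩ := Submonoid.exists_list_of_mem_closure hg
    refine ⟨l.pmap (fun x hx => ⟨x, hx⟩) hl, ?_⟩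
    simp only [List.map_pmap]
    simpa [List.pmap_eq_map] using hprod
  exact hsurj.countable

/-- if `Γ` has the factorization property and `R 0 < R 1 < R 2 < ⋯` is a
strictly increasing sequence of `Γ`-limit quotients of a finitely generated group `G`
(i.e. `R (m+1) > R m` for all `m`), then there is a `Γ`-limit quotient `R'` of `G`
with `R' > R m` for every `m`. -/
theorem statement_4 {Γ : Type*} [Group Γ] (hfac : FactorizationProperty Γ)
    {G : Type*} [Group G] [Group.FG G]
    (R : ℕ → GrpCat.{uG}) (η : ∀ m, G →* R m)
    (hlq : ∀ m, IsLimitQuotient Γ (η m))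
    (hinc : ∀ m, QuotGT (η (m + 1)) (η m)) :
    ∃ (R' : GrpCat.{uG}) (q : G →* R'), IsLimitQuotient Γ q ∧ ∀ m, QuotGT q (η m) := by
  classical
  -- enumeration of G
  have : Countable G := countable_of_fg' G
  obtain ⟨e, he⟩ := exists_surjective_nat G
  -- stable sequences for each quotient
  have hsurj : ∀ m, Function.Surjective (η m) := fun m => (hlq m).1
  choose h hstab hker using fun m => (hlq m).2
  -- kernels are antitone
  have hstep : ∀ m, (η (m + 1)).ker ≤ (η m).ker := by
    intro m g hg
    obtain ⟨τ, -, -, hcomp⟩ := hinc m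
    have : η m g = τ (η (m + 1) g) := by rw [hcomp]; rfl
    simp only [MonoidHom.mem_ker] at hg ⊢
    rw [this, hg, map_one]
  have hmono : ∀ {m m'}, m ≤ m' → (η m').ker ≤ (η m).ker := by
    intro m m' hle
    induction hle with
    | refl => exact le_rfl
    | step h ih => exact le_trans (hstep _) ih
  -- choose a diagonal index for each m
  have hex : ∀ m : ℕ, ∃ n : ℕ, ∀ i ≤ m,
      (e i ∈ stableKer (h m) → h m n (e i) = 1) ∧
      (e i ∉ stableKer (h m) → h m n (e i) ≠ 1) := by
    intro m
    have ev : ∀ᶠ n in atTop, ∀ i ∈ Finset.range (m + 1),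
        (e i ∈ stableKer (h m) → h m n (e i) = 1) ∧
        (e i ∉ stableKer (h m) → h m n (e i) ≠ 1) := by
      rw [Finset.eventually_all]
      intro i _
      by_cases hi : e i ∈ stableKer (h m)
      · exact hi.mono fun n hn => ⟨fun _ => hn, fun hc => absurd hi hc⟩
      · rcases hstab m (e i) with h1 | h2
        · exact absurd h1 hi
        · exact h2.mono fun n hn => ⟨fun hc => absurd hc hi, fun _ => hn⟩
    obtain ⟨n, hn⟩ := ev.exists
    exact ⟨n, fun i hi => hn i (Finset.mem_range.mpr (Nat.lt_succ_of_le hi))⟩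
  choose N hN using hex
  set f : ℕ → G →* Γ := fun m => h m (N m) with hf
  -- key dichotomy for f
  have hfone : ∀ g : G, (∀ m, g ∈ (η m).ker) → ∀ᶠ m in atTop, f m g = 1 := by
    intro g hg
    obtain ⟨i, rfl⟩ := he g
    filter_upwards [eventually_ge_atTop i] with m him
    have : e i ∈ stableKer (h m) := by rw [← hker m]; exact hg m
    exact (hN m i him).1 this
  have hfne : ∀ g : G, (∃ m, g ∉ (η m).ker) → ∀ᶠ m in atTop, f m g ≠ 1 := by
    intro g ⟨m₀, hm₀⟩
    obtain ⟨i, rfl⟩ := he g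
    filter_upwards [eventually_ge_atTop i, eventually_ge_atTop m₀] with m him hm₀m
    have hnot : e i ∉ (η m).ker := fun hc => hm₀ (hmono hm₀m hc)
    rw [hker m] at hnot
    exact (hN m i him).2 hnot
  -- the target group: image of G in the product
  let Pm : G →* (∀ m, R m) :=
    { toFun := fun g m => η m g
      map_one' := by funext m; simp
      map_mul' := fun a b => by funext m; simp }
  refine ⟨GrpCat.of ↥Pm.range, Pm.rangeRestrict, ⟨Pm.rangeRestrict_surjective, f, ?_, ?_⟩, ?_⟩
  · -- stability of f
    intro g
    by_cases hg : ∀ m, g ∈ (η m).ker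
    · exact Or.inl (hfone g hg)
    · exact Or.inr (hfne g (not_forall.mp hg))
  · -- kernel identification
    ext g
    have hmem : Pm.rangeRestrict g = 1 ↔ ∀ m, η m g = 1 := by
      constructor
      · intro hg m
        have : Pm g = 1 := congrArg Subtype.val hg
        exact congrFun this m
      · intro hg
        apply Subtype.ext
        funext m
        exact hg m
    simp only [MonoidHom.mem_ker]
    rw [show (g ∈ stableKer f) = (∀ᶠ m in atTop, f m g = 1) from rfl]
    exact hmem.trans
      ⟨fun hg => hfone g fun m => hg m,
       fun hg => by
        by_contra hc
        push_neg at hc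
        obtain ⟨m₀, hm₀⟩ := hc
        obtain ⟨m, h1, h2⟩ := (hg.and (hfne g ⟨m₀, hm₀⟩)).exists
        exact h2 h1⟩
  · -- R' > R m for every m
    intro m
    refine ⟨(Pi.evalMonoidHom (fun m => (R m : Type uG)) m).comp Pm.range.subtype,
      ?_, ?_, ?_⟩
    · intro y
      obtain ⟨g, hg⟩ := hsurj m y
      exact ⟨Pm.rangeRestrict g, hg⟩
    · -- nontrivial kernel
      obtain ⟨τ, -, hker', hcomp⟩ := hinc m
      have hne : ∃ x : R (m+1), x ∈ τ.ker ∧ x ≠ 1 := by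
        by_contra hc
        push_neg at hc
        exact hker' (Subgroup.eq_bot_iff_forall _ |>.mpr fun x hx => hc x hx)
      obtain ⟨x, hxker, hxne⟩ := hne
      obtain ⟨g, hg⟩ := hsurj (m+1) x
      intro hbot
      have hmem : Pm.rangeRestrict g ∈
          ((Pi.evalMonoidHom (fun m => (R m : Type uG)) m).comp Pm.range.subtype).ker := by
        show η m g = 1
        have : η m g = τ (η (m + 1) g) := by rw [hcomp]; rfl
        rw [this, hg]
        exact hxker
      rw [hbot, Subgroup.mem_bot] at hmem
      have : η (m+1) g = 1 := by
        have := congrArg Subtype.val hmem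
        exact congrFun this (m+1)
      rw [hg] at this
      exact hxne this
    · -- compatibility
      ext g
      rfl
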